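/- arXiv:1109.3229 — 4 statements merged into one kernel-verified Lean document; each statement's English description precedes it below -/
import Mathlib

section
/- For any quaternion ξ, there exist infinitely many pairs of Hurwitz integers (p,q) with q ≠ 0 such that |ξ − p·q⁻¹|₂ < 2/|q|₂². -/
open MeasureTheory Metric Filter Set Quaternion

noncomputable instance : MeasurableSpace (Quaternion ℝ) := borel _
instance : BorelSpace (Quaternion ℝ) := ⟨rfl⟩

/-- Lebesgue measure on the quaternions, transported from `ℝ⁴`. -/
noncomputable instance : MeasureSpace (Quaternion ℝ) :=
  ⟨Measure.map (Quaternion.equivTuple ℝ).symm volume⟩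

/-- A quaternion is a Hurwitz integer if all its coordinates are integers or
all its coordinates are in `ℤ + 1/2`. -/
def IsHurwitz (x : Quaternion ℝ) : Prop :=
  (∃ a b c d : ℤ, x.re = a ∧ x.imI = b ∧ x.imJ = c ∧ x.imK = d) ∨
  (∃ a b c d : ℤ, x.re = a + 1/2 ∧ x.imI = b + 1/2 ∧ x.imJ = c + 1/2 ∧ x.imK = d + 1/2)

/-- The fundamental domain `Δ = [0,1)³ × [0,1/2)` for Hurwitz translations. -/
def fundDom : Set (Quaternion ℝ) :=
  {x | 0 ≤ x.re ∧ x.re < 1 ∧ 0 ≤ x.imI ∧ x.imI < 1 ∧ 0 ≤ x.imJ ∧ x.imJ < 1 ∧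
    0 ≤ x.imK ∧ x.imK < 1/2}

/-- The closed fundamental domain `Δ̄ = [0,1]³ × [0,1/2]`. -/
def fundDomCl : Set (Quaternion ℝ) :=
  {x | 0 ≤ x.re ∧ x.re ≤ 1 ∧ 0 ≤ x.imI ∧ x.imI ≤ 1 ∧ 0 ≤ x.imJ ∧ x.imJ ≤ 1 ∧
    0 ≤ x.imK ∧ x.imK ≤ 1/2}

/-! ### Auxiliary lemmas -/

section Aux

local notation "E4" => EuclideanSpace ℝ (Fin 4)

lemma coord_abs_le_norm (v : E4) (i : Fin 4) : |v i| ≤ ‖v‖ := by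
  rw [EuclideanSpace.norm_eq]
  have h : |v i| = Real.sqrt (‖v i‖ ^ 2) := by
    rw [Real.sqrt_sq_eq_abs]; simp [abs_abs, Real.norm_eq_abs]
  rw [h]
  apply Real.sqrt_le_sqrt
  exact Finset.single_le_sum (f := fun j => ‖v j‖ ^ 2) (fun j _ => by positivity)
    (Finset.mem_univ i)

lemma packing_lemma (s : Finset E4) (r : ℝ) (D : Set E4)
    (hsub : ∀ x ∈ s, ball x r ⊆ D)
    (hvol : volume D < s.card * volume (ball (0 : E4) r)) :
    ∃ x ∈ s, ∃ y ∈ s, x ≠ y ∧ dist x y < 2 * r := by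
  by_contra hcon
  push_neg at hcon
  have hdisj : (s : Set E4).PairwiseDisjoint (fun x => ball x r) := by
    intro x hx y hy hxy
    exact ball_disjoint_ball (by linarith [hcon x hx y hy hxy])
  have h1 : volume (⋃ x ∈ s, ball x r) = ∑ x ∈ s, volume (ball x r) :=
    measure_biUnion_finset hdisj (fun x _ => measurableSet_ball)
  have h2 : ∀ x ∈ s, volume (ball x r) = volume (ball (0 : E4) r) := fun x _ =>
    Measure.addHaar_ball_center volume x r
  rw [Finset.sum_congr rfl h2, Finset.sum_const, nsmul_eq_mul] at h1
  have h3 : volume (⋃ x ∈ s, ball x r) ≤ volume D :=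
    measure_mono (Set.iUnion₂_subset hsub)
  rw [h1] at h3
  exact absurd (lt_of_le_of_lt h3 hvol) (lt_irrefl _)

lemma vol_ball_E4 (r : ℝ) :
    volume (ball (0 : E4) r) = ENNReal.ofReal r ^ 4 * ENNReal.ofReal (Real.pi ^ 2 / 2) := by
  rw [EuclideanSpace.volume_ball, Fintype.card_fin]
  congr 1
  have h3 : ((4:ℕ):ℝ) / 2 + 1 = ((2:ℕ) : ℝ) + 1 := by norm_num
  rw [h3, Real.Gamma_nat_eq_factorial]
  have h : Real.sqrt Real.pi ^ 4 = Real.pi ^ 2 := by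
    rw [show (4:ℕ) = 2 * 2 by norm_num, pow_mul, Real.sq_sqrt Real.pi_nonneg]
  rw [h]; norm_num

/-- The inflated closed fundamental box in `ℝ⁴`. -/
def boxSet (r : ℝ) : Set (EuclideanSpace ℝ (Fin 4)) :=
  (MeasurableEquiv.toLp 2 (Fin 4 → ℝ)).symm ⁻¹'
    (Set.univ.pi fun i : Fin 4 => Set.Icc (-r) (if i = 3 then 1/2 + r else 1 + r))

lemma mem_boxSet {x : E4} {r : ℝ} :
    x ∈ boxSet r ↔ ∀ i : Fin 4, -r ≤ x i ∧ x i ≤ (if i = 3 then 1/2 + r else 1 + r) := by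
  simp [boxSet, Set.mem_univ_pi, MeasurableEquiv.toLp_symm_apply, Pi.le_def, forall_and]

lemma vol_box (r : ℝ) (hr : 0 ≤ r) :
    volume (boxSet r) = ENNReal.ofReal (1 + 2*r) ^ 3 * ENNReal.ofReal (1/2 + 2*r) := by
  have hmp := (EuclideanSpace.volume_preserving_symm_measurableEquiv_toLp (Fin 4))
  rw [boxSet, hmp.measure_preimage
    (MeasurableSet.univ_pi fun i => measurableSet_Icc).nullMeasurableSet, volume_pi_pi]
  simp only [Real.volume_Icc, Fin.prod_univ_four,
    show ((0:Fin 4) = 3) = False by decide, show ((1:Fin 4) = 3) = False by decide,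
    show ((2:Fin 4) = 3) = False by decide, show ((3:Fin 4) = 3) = True by decide,
    if_false, if_true]
  rw [show (1:ℝ)/2 + r - -r = 1/2 + 2*r by ring, show (1:ℝ) + r - -r = 1 + 2*r by ring]
  ring

lemma IsHurwitz.sub {x y : Quaternion ℝ} (hx : IsHurwitz x) (hy : IsHurwitz y) :
    IsHurwitz (x - y) := by
  obtain ⟨a,b,c,d,h1,h2,h3,h4⟩ | ⟨a,b,c,d,h1,h2,h3,h4⟩ := hx <;>
    obtain ⟨a',b',c',d',g1,g2,g3,g4⟩ | ⟨a',b',c',d',g1,g2,g3,g4⟩ := hy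
  · refine Or.inl ⟨a-a', b-b', c-c', d-d', ?_, ?_, ?_, ?_⟩ <;>
      simp only [Quaternion.re_sub, Quaternion.imI_sub, Quaternion.imJ_sub, Quaternion.imK_sub,
        h1,h2,h3,h4,g1,g2,g3,g4] <;> push_cast <;> ring
  · refine Or.inr ⟨a-a'-1, b-b'-1, c-c'-1, d-d'-1, ?_, ?_, ?_, ?_⟩ <;>
      simp only [Quaternion.re_sub, Quaternion.imI_sub, Quaternion.imJ_sub, Quaternion.imK_sub,
        h1,h2,h3,h4,g1,g2,g3,g4] <;> push_cast <;> ring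
  · refine Or.inr ⟨a-a', b-b', c-c', d-d', ?_, ?_, ?_, ?_⟩ <;>
      simp only [Quaternion.re_sub, Quaternion.imI_sub, Quaternion.imJ_sub, Quaternion.imK_sub,
        h1,h2,h3,h4,g1,g2,g3,g4] <;> push_cast <;> ring
  · refine Or.inl ⟨a-a', b-b', c-c', d-d', ?_, ?_, ?_, ?_⟩ <;>
      simp only [Quaternion.re_sub, Quaternion.imI_sub, Quaternion.imJ_sub, Quaternion.imK_sub,
        h1,h2,h3,h4,g1,g2,g3,g4] <;> push_cast <;> ring

lemma IsHurwitz.one_le_norm {q : Quaternion ℝ} (hq : IsHurwitz q) (h0 : q ≠ 0) : 1 ≤ ‖q‖ := by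
  have hns : normSq q = ‖q‖ * ‖q‖ := Quaternion.normSq_eq_norm_mul_self q
  have h1 : (1:ℝ) ≤ normSq q := by
    rw [Quaternion.normSq_def']
    obtain ⟨a,b,c,d,h1,h2,h3,h4⟩ | ⟨a,b,c,d,h1,h2,h3,h4⟩ := hq
    · have hne : a^2 + b^2 + c^2 + d^2 ≠ 0 := by
        intro h
        have ha : a = 0 := by
          have : a^2 = 0 := by nlinarith [sq_nonneg a, sq_nonneg b, sq_nonneg c, sq_nonneg d]
          exact pow_eq_zero_iff (n := 2) (by norm_num) |>.mp this
        have hb : b = 0 := by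
          have : b^2 = 0 := by nlinarith [sq_nonneg a, sq_nonneg b, sq_nonneg c, sq_nonneg d]
          exact pow_eq_zero_iff (n := 2) (by norm_num) |>.mp this
        have hc : c = 0 := by
          have : c^2 = 0 := by nlinarith [sq_nonneg a, sq_nonneg b, sq_nonneg c, sq_nonneg d]
          exact pow_eq_zero_iff (n := 2) (by norm_num) |>.mp this
        have hd : d = 0 := by
          have : d^2 = 0 := by nlinarith [sq_nonneg a, sq_nonneg b, sq_nonneg c, sq_nonneg d]
          exact pow_eq_zero_iff (n := 2) (by norm_num) |>.mp this
        apply h0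
        ext <;> simp [h1, h2, h3, h4, ha, hb, hc, hd]
      have hpos : 0 < a^2 + b^2 + c^2 + d^2 :=
        lt_of_le_of_ne (by positivity) (Ne.symm hne)
      have h5 : (1:ℤ) ≤ a^2 + b^2 + c^2 + d^2 := hpos
      rw [h1, h2, h3, h4]
      exact_mod_cast h5
    · have e1 : ∀ z : ℤ, (1:ℝ)/4 ≤ ((z:ℝ) + 1/2)^2 := by
        intro z
        rcases le_or_gt 0 (z:ℝ) with h | h
        · nlinarith
        · have hz : z < 0 := by exact_mod_cast h
          have hz1 : z ≤ -1 := by omega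
          have : (z:ℝ) ≤ -1 := by exact_mod_cast hz1
          nlinarith
      rw [h1, h2, h3, h4]
      nlinarith [e1 a, e1 b, e1 c, e1 d]
  nlinarith [norm_nonneg q]

lemma exists_frac (x : Quaternion ℝ) : ∃ h : Quaternion ℝ, IsHurwitz h ∧ x - h ∈ fundDom := by
  by_cases hK : Int.fract x.imK < 1/2
  · refine ⟨⟨⌊x.re⌋, ⌊x.imI⌋, ⌊x.imJ⌋, ⌊x.imK⌋⟩, Or.inl ⟨_,_,_,_, rfl, rfl, rfl, rfl⟩, ?_⟩
    exact ⟨Int.fract_nonneg _, Int.fract_lt_one _, Int.fract_nonneg _, Int.fract_lt_one _,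
      Int.fract_nonneg _, Int.fract_lt_one _, Int.fract_nonneg _, hK⟩
  · push_neg at hK
    set c : ℝ → ℤ := fun t => if Int.fract t < 1/2 then ⌊t⌋ - 1 else ⌊t⌋ with hc
    set H : Quaternion ℝ :=
      ⟨(c x.re : ℝ) + 1/2, (c x.imI : ℝ) + 1/2, (c x.imJ : ℝ) + 1/2, (⌊x.imK⌋ : ℝ) + 1/2⟩
      with hH
    refine ⟨H, Or.inr ⟨_,_,_,_, rfl, rfl, rfl, rfl⟩, ?_⟩
    have key : ∀ t : ℝ, 0 ≤ t - ((c t : ℝ) + 1/2) ∧ t - ((c t : ℝ) + 1/2) < 1 := by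
      intro t
      have hfr := Int.fract_nonneg t
      have hfr2 := Int.fract_lt_one t
      have hfl : t - ⌊t⌋ = Int.fract t := rfl
      by_cases h : Int.fract t < 1/2
      · simp only [hc, if_pos h]
        push_cast
        constructor <;> nlinarith
      · simp only [hc, if_neg h]
        push_neg at h
        constructor <;> nlinarith
    have hre : (x - H).re = x.re - ((c x.re : ℝ) + 1/2) := rfl
    have himI : (x - H).imI = x.imI - ((c x.imI : ℝ) + 1/2) := rfl
    have himJ : (x - H).imJ = x.imJ - ((c x.imJ : ℝ) + 1/2) := rfl
    have himK : (x - H).imK = x.imK - ((⌊x.imK⌋ : ℝ) + 1/2) := rfl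
    have hfl : x.imK - ⌊x.imK⌋ = Int.fract x.imK := rfl
    have hfr2 := Int.fract_lt_one x.imK
    refine ⟨?_, ?_, ?_, ?_, ?_, ?_, ?_, ?_⟩
    · rw [hre]; exact (key x.re).1
    · rw [hre]; exact (key x.re).2
    · rw [himI]; exact (key x.imI).1
    · rw [himI]; exact (key x.imI).2
    · rw [himJ]; exact (key x.imJ).1
    · rw [himJ]; exact (key x.imJ).2
    · rw [himK]; nlinarith
    · rw [himK]; nlinarith

noncomputable def intQ (v : ℕ × ℕ × ℕ × ℕ) : Quaternion ℝ := ⟨v.1, v.2.1, v.2.2.1, v.2.2.2⟩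
noncomputable def halfQ (v : ℕ × ℕ × ℕ × ℕ) : Quaternion ℝ :=
  ⟨v.1 + 1/2, v.2.1 + 1/2, v.2.2.1 + 1/2, v.2.2.2 + 1/2⟩

@[simp] lemma intQ_re (v) : (intQ v).re = v.1 := rfl
@[simp] lemma intQ_imI (v) : (intQ v).imI = v.2.1 := rfl
@[simp] lemma intQ_imJ (v) : (intQ v).imJ = v.2.2.1 := rfl
@[simp] lemma intQ_imK (v) : (intQ v).imK = v.2.2.2 := rfl
@[simp] lemma halfQ_re (v) : (halfQ v).re = v.1 + 1/2 := rfl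
@[simp] lemma halfQ_imI (v) : (halfQ v).imI = v.2.1 + 1/2 := rfl
@[simp] lemma halfQ_imJ (v) : (halfQ v).imJ = v.2.2.1 + 1/2 := rfl
@[simp] lemma halfQ_imK (v) : (halfQ v).imK = v.2.2.2 + 1/2 := rfl

def box4 (n : ℕ) : Finset (ℕ × ℕ × ℕ × ℕ) :=
  (Finset.range n) ×ˢ (Finset.range n) ×ˢ (Finset.range n) ×ˢ (Finset.range n)

lemma box4_card (n : ℕ) : (box4 n).card = n^4 := by
  simp [box4, Finset.card_product]; ring

noncomputable def hurwitzBox (M : ℕ) : Finset (Quaternion ℝ) :=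
  letI := Classical.decEq (Quaternion ℝ)
  ((box4 (M+1)).image intQ) ∪ ((box4 M).image halfQ)

lemma intQ_inj : Function.Injective intQ := by
  intro v w h
  have h1 : ((v.1 : ℝ)) = w.1 := congrArg QuaternionAlgebra.re h
  have h2 : ((v.2.1 : ℝ)) = w.2.1 := congrArg QuaternionAlgebra.imI h
  have h3 : ((v.2.2.1 : ℝ)) = w.2.2.1 := congrArg QuaternionAlgebra.imJ h
  have h4 : ((v.2.2.2 : ℝ)) = w.2.2.2 := congrArg QuaternionAlgebra.imK h
  have e1 : v.1 = w.1 := by exact_mod_cast h1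
  have e2 : v.2.1 = w.2.1 := by exact_mod_cast h2
  have e3 : v.2.2.1 = w.2.2.1 := by exact_mod_cast h3
  have e4 : v.2.2.2 = w.2.2.2 := by exact_mod_cast h4
  exact Prod.ext e1 (Prod.ext e2 (Prod.ext e3 e4))

lemma halfQ_inj : Function.Injective halfQ := by
  intro v w h
  have h1 : ((v.1 : ℝ)) + 1/2 = (w.1 : ℝ) + 1/2 := congrArg QuaternionAlgebra.re h
  have h2 : ((v.2.1 : ℝ)) + 1/2 = (w.2.1 : ℝ) + 1/2 := congrArg QuaternionAlgebra.imI h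
  have h3 : ((v.2.2.1 : ℝ)) + 1/2 = (w.2.2.1 : ℝ) + 1/2 := congrArg QuaternionAlgebra.imJ h
  have h4 : ((v.2.2.2 : ℝ)) + 1/2 = (w.2.2.2 : ℝ) + 1/2 := congrArg QuaternionAlgebra.imK h
  have e1 : v.1 = w.1 := by
    have : (v.1:ℝ) = w.1 := by linarith
    exact_mod_cast this
  have e2 : v.2.1 = w.2.1 := by
    have : (v.2.1:ℝ) = w.2.1 := by linarith
    exact_mod_cast this
  have e3 : v.2.2.1 = w.2.2.1 := by
    have : (v.2.2.1:ℝ) = w.2.2.1 := by linarith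
    exact_mod_cast this
  have e4 : v.2.2.2 = w.2.2.2 := by
    have : (v.2.2.2:ℝ) = w.2.2.2 := by linarith
    exact_mod_cast this
  exact Prod.ext e1 (Prod.ext e2 (Prod.ext e3 e4))

lemma hurwitzBox_card (M : ℕ) : (hurwitzBox M).card = (M+1)^4 + M^4 := by
  classical
  rw [hurwitzBox]
  rw [Finset.card_union_of_disjoint, Finset.card_image_of_injective _ intQ_inj,
    Finset.card_image_of_injective _ halfQ_inj, box4_card, box4_card]
  rw [Finset.disjoint_left]
  rintro q hq hq'
  obtain ⟨v, -, rfl⟩ := Finset.mem_image.mp hq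
  obtain ⟨w, -, hw⟩ := Finset.mem_image.mp hq'
  have h1 : ((w.1 : ℝ)) + 1/2 = (v.1 : ℝ) := congrArg QuaternionAlgebra.re hw
  have h2 : 2 * (w.1 : ℝ) + 1 = 2 * v.1 := by linarith
  have h3 : 2 * w.1 + 1 = 2 * v.1 := by exact_mod_cast h2
  omega

lemma hurwitzBox_spec (M : ℕ) {q : Quaternion ℝ} (hq : q ∈ hurwitzBox M) :
    IsHurwitz q ∧ (0 ≤ q.re ∧ q.re ≤ M) ∧ (0 ≤ q.imI ∧ q.imI ≤ M) ∧
      (0 ≤ q.imJ ∧ q.imJ ≤ M) ∧ (0 ≤ q.imK ∧ q.imK ≤ M) := by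
  classical
  rw [hurwitzBox] at hq
  rcases Finset.mem_union.mp hq with hq | hq
  · obtain ⟨v, hv, rfl⟩ := Finset.mem_image.mp hq
    simp only [box4, Finset.mem_product, Finset.mem_range] at hv
    obtain ⟨hv1, hv2, hv3, hv4⟩ := hv
    have b1 : (v.1 : ℝ) ≤ M := by exact_mod_cast Nat.lt_succ_iff.mp hv1
    have b2 : (v.2.1 : ℝ) ≤ M := by exact_mod_cast Nat.lt_succ_iff.mp hv2
    have b3 : (v.2.2.1 : ℝ) ≤ M := by exact_mod_cast Nat.lt_succ_iff.mp hv3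
    have b4 : (v.2.2.2 : ℝ) ≤ M := by exact_mod_cast Nat.lt_succ_iff.mp hv4
    refine ⟨Or.inl ⟨v.1, v.2.1, v.2.2.1, v.2.2.2, by push_cast; simp, by push_cast; simp,
      by push_cast; simp, by push_cast; simp⟩, ?_, ?_, ?_, ?_⟩ <;>
      simp only [intQ_re, intQ_imI, intQ_imJ, intQ_imK] <;>
      exact ⟨Nat.cast_nonneg _, by assumption⟩
  · obtain ⟨v, hv, rfl⟩ := Finset.mem_image.mp hq
    simp only [box4, Finset.mem_product, Finset.mem_range] at hv
    obtain ⟨hv1, hv2, hv3, hv4⟩ := hv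
    have b1 : (v.1 : ℝ) + 1 ≤ M := by exact_mod_cast hv1
    have b2 : (v.2.1 : ℝ) + 1 ≤ M := by exact_mod_cast hv2
    have b3 : (v.2.2.1 : ℝ) + 1 ≤ M := by exact_mod_cast hv3
    have b4 : (v.2.2.2 : ℝ) + 1 ≤ M := by exact_mod_cast hv4
    refine ⟨Or.inr ⟨v.1, v.2.1, v.2.2.1, v.2.2.2, by push_cast; simp, by push_cast; simp,
      by push_cast; simp, by push_cast; simp⟩, ?_, ?_, ?_, ?_⟩ <;>
      simp only [halfQ_re, halfQ_imI, halfQ_imJ, halfQ_imK] <;>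
      exact ⟨by positivity, by linarith⟩

lemma tuple_coord_bounds {w : Quaternion ℝ} (hw : w ∈ fundDom) (i : Fin 4) :
    0 ≤ (Quaternion.linearIsometryEquivTuple w) i ∧
      (Quaternion.linearIsometryEquivTuple w) i ≤ (if i = 3 then 1/2 else 1) := by
  obtain ⟨w1, w2, w3, w4, w5, w6, w7, w8⟩ := hw
  fin_cases i <;>
    simp [Quaternion.linearIsometryEquivTuple_apply] <;>
    exact ⟨by linarith, by linarith⟩

set_option maxHeartbeats 1000000 in
/-- The key pigeonhole step. -/
lemma dirichlet_step (ξ : Quaternion ℝ) (M : ℕ) (hM : 100 ≤ M) :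
    ∃ p q : Quaternion ℝ, IsHurwitz p ∧ IsHurwitz q ∧ q ≠ 0 ∧ ‖q‖ ≤ 2 * M ∧
      ‖ξ * q - p‖ < 1 / M := by
  classical
  have hM0 : (0:ℝ) < M := by
    have : (100:ℝ) ≤ M := by exact_mod_cast hM
    linarith
  set r : ℝ := 1 / (2 * M) with hrdef
  have hr : 0 < r := by positivity
  set F : Quaternion ℝ → Quaternion ℝ := fun x => Classical.choose (exists_frac x) with hFdef
  have hF : ∀ x : Quaternion ℝ, IsHurwitz (F x) ∧ x - F x ∈ fundDom := fun x =>
    Classical.choose_spec (exists_frac x)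
  set φ : Quaternion ℝ → EuclideanSpace ℝ (Fin 4) :=
    fun q => Quaternion.linearIsometryEquivTuple (ξ * q - F (ξ * q)) with hφdef
  have main : ∃ q ∈ hurwitzBox M, ∃ q' ∈ hurwitzBox M, q ≠ q' ∧ dist (φ q) (φ q') < 2 * r := by
    by_contra hcon
    push_neg at hcon
    have hinj : Set.InjOn φ (hurwitzBox M) := by
      intro a ha b hb hab
      by_contra hne
      have h2 := hcon a ha b hb hne
      rw [hab, dist_self] at h2
      linarith
    set s : Finset (EuclideanSpace ℝ (Fin 4)) := (hurwitzBox M).image φ with hsdef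
    have hcard : s.card = (M+1)^4 + M^4 := by
      rw [hsdef, Finset.card_image_of_injOn hinj, hurwitzBox_card]
    have hsub : ∀ x ∈ s, ball x r ⊆ boxSet r := by
      intro x hx
      obtain ⟨q, hq, rfl⟩ := Finset.mem_image.mp hx
      intro y hy
      rw [mem_ball, dist_eq_norm] at hy
      rw [mem_boxSet]
      intro i
      have hcb : 0 ≤ φ q i ∧ φ q i ≤ (if i = 3 then 1/2 else 1) :=
        tuple_coord_bounds (hF (ξ * q)).2 i
      have hco : |y i - φ q i| ≤ ‖y - φ q‖ := by
        have : (y - φ q) i = y i - φ q i := rfl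
        rw [← this]
        exact coord_abs_le_norm _ i
      have habs : |y i - φ q i| < r := lt_of_le_of_lt hco hy
      rw [abs_lt] at habs
      constructor
      · linarith [hcb.1, habs.1]
      · rcases eq_or_ne i 3 with h | h
        · rw [if_pos h]
          rw [if_pos h] at hcb
          linarith [hcb.2, habs.2]
        · rw [if_neg h]
          rw [if_neg h] at hcb
          linarith [hcb.2, habs.2]
    have hvol : volume (boxSet r) < s.card * volume (ball (0 : EuclideanSpace ℝ (Fin 4)) r) := by
      rw [vol_box r hr.le, vol_ball_E4, hcard]
      have hA : (0:ℝ) ≤ 1 + 2*r := by linarith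
      rw [← ENNReal.ofReal_pow hA, ← ENNReal.ofReal_mul (by positivity),
        ← ENNReal.ofReal_pow hr.le, ← ENNReal.ofReal_mul (by positivity),
        ← ENNReal.ofReal_natCast, ← ENNReal.ofReal_mul (by positivity)]
      rw [ENNReal.ofReal_lt_ofReal_iff_of_nonneg (by positivity)]
      have hMr : (M:ℝ) * r = 1/2 := by
        rw [hrdef]; field_simp; all_goals ring
      have hr4 : (M:ℝ)^4 * r^4 = 1/16 := by
        rw [← mul_pow, hMr]; norm_num
      have h2rM : 2 * r = 1/(M:ℝ) := by
        rw [hrdef]; field_simp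
      have h2r100 : 2 * r ≤ 1/100 := by
        have h1 : (100:ℝ) ≤ M := by exact_mod_cast hM
        rw [h2rM, div_le_div_iff₀ (by linarith) (by norm_num)]
        linarith
      have hpow : (M:ℝ)^4 ≤ ((M:ℝ)+1)^4 :=
        pow_le_pow_left₀ (by positivity) (by linarith) 4
      have hpi := Real.pi_gt_d6
      push_cast
      have hA : (1+2*r)^3 * (1/2+2*r) ≤ (1+(1:ℝ)/100)^3 * (1/2+1/100) := by
        have e1 : (1:ℝ)+2*r ≤ 1+1/100 := by linarith
        have e2 : (1:ℝ)/2+2*r ≤ 1/2+1/100 := by linarith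
        have e3 : (0:ℝ) ≤ 1+2*r := by linarith
        have := mul_le_mul (pow_le_pow_left₀ e3 e1 3) e2 (by linarith) (by positivity)
        linarith
      have hB : Real.pi^2/16 ≤ (((M:ℝ)+1)^4 + (M:ℝ)^4) * (r^4 * (Real.pi^2/2)) := by
        have e4 : (0:ℝ) ≤ r^4 * (Real.pi^2/2) := by positivity
        have e5 : 2*(M:ℝ)^4 ≤ ((M:ℝ)+1)^4 + (M:ℝ)^4 := by linarith
        have e6 : 2*(M:ℝ)^4 * (r^4 * (Real.pi^2/2)) = ((M:ℝ)^4 * r^4) * Real.pi^2 := by ring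
        have e7 := mul_le_mul_of_nonneg_right e5 e4
        rw [e6, hr4] at e7
        linarith
      nlinarith [hA, hB, hpi]
    obtain ⟨x, hx, y, hy, hxy, hdist⟩ := packing_lemma s r (boxSet r) hsub hvol
    obtain ⟨q, hq, rfl⟩ := Finset.mem_image.mp hx
    obtain ⟨q', hq', rfl⟩ := Finset.mem_image.mp hy
    have hne : q ≠ q' := fun h => hxy (by rw [h])
    exact absurd hdist (not_lt.mpr (hcon q hq q' hq' hne))
  obtain ⟨q, hq, q', hq', hne, hdist⟩ := main
  set p : Quaternion ℝ := F (ξ * q) - F (ξ * q') with hpdef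
  refine ⟨p, q - q', (hF (ξ * q)).1.sub (hF (ξ * q')).1,
    (hurwitzBox_spec M hq).1.sub (hurwitzBox_spec M hq').1, sub_ne_zero.mpr hne, ?_, ?_⟩
  · -- ‖q - q'‖ ≤ 2M
    obtain ⟨-, hb1, hb2, hb3, hb4⟩ := hurwitzBox_spec M hq
    obtain ⟨-, hc1, hc2, hc3, hc4⟩ := hurwitzBox_spec M hq'
    have hns : normSq (q - q') = ‖q - q'‖ * ‖q - q'‖ := Quaternion.normSq_eq_norm_mul_self _
    have e1 : (q.re - q'.re)^2 ≤ (M:ℝ)^2 := by nlinarith [hb1.1, hb1.2, hc1.1, hc1.2]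
    have e2 : (q.imI - q'.imI)^2 ≤ (M:ℝ)^2 := by nlinarith [hb2.1, hb2.2, hc2.1, hc2.2]
    have e3 : (q.imJ - q'.imJ)^2 ≤ (M:ℝ)^2 := by nlinarith [hb3.1, hb3.2, hc3.1, hc3.2]
    have e4 : (q.imK - q'.imK)^2 ≤ (M:ℝ)^2 := by nlinarith [hb4.1, hb4.2, hc4.1, hc4.2]
    have hsq : normSq (q - q') ≤ 4 * (M:ℝ)^2 := by
      rw [Quaternion.normSq_def']
      simp only [Quaternion.re_sub, Quaternion.imI_sub, Quaternion.imJ_sub, Quaternion.imK_sub]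
      linarith
    nlinarith [norm_nonneg (q - q')]
  · -- ‖ξ(q-q') - p‖ < 1/M
    have hiso : dist (φ q) (φ q') =
        ‖(ξ * q - F (ξ * q)) - (ξ * q' - F (ξ * q'))‖ := by
      have h1 : dist (φ q) (φ q') = dist (ξ * q - F (ξ * q)) (ξ * q' - F (ξ * q')) :=
        Quaternion.linearIsometryEquivTuple.dist_map _ _
      rw [h1, dist_eq_norm]
    have hrw : (ξ * q - F (ξ * q)) - (ξ * q' - F (ξ * q')) = ξ * (q - q') - p := by
      rw [mul_sub, hpdef]; abel
    have h2r : 2 * r = 1 / (M:ℝ) := by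
      rw [hrdef]; field_simp
    rw [hiso, hrw, h2r] at hdist
    exact hdist

lemma IsHurwitz.odd_mul {x : Quaternion ℝ} (hx : IsHurwitz x) (k : ℕ) :
    IsHurwitz (((2 * (k:ℝ) + 1 : ℝ) : Quaternion ℝ) * x) := by
  have hre : ((((2 * (k:ℝ) + 1 : ℝ)) : Quaternion ℝ) * x).re = (2*(k:ℝ)+1) * x.re := by
    rw [Quaternion.coe_mul_eq_smul]; simp [Quaternion.re_smul, smul_eq_mul]
  have himI : ((((2 * (k:ℝ) + 1 : ℝ)) : Quaternion ℝ) * x).imI = (2*(k:ℝ)+1) * x.imI := by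
    rw [Quaternion.coe_mul_eq_smul]; simp [Quaternion.imI_smul, smul_eq_mul]
  have himJ : ((((2 * (k:ℝ) + 1 : ℝ)) : Quaternion ℝ) * x).imJ = (2*(k:ℝ)+1) * x.imJ := by
    rw [Quaternion.coe_mul_eq_smul]; simp [Quaternion.imJ_smul, smul_eq_mul]
  have himK : ((((2 * (k:ℝ) + 1 : ℝ)) : Quaternion ℝ) * x).imK = (2*(k:ℝ)+1) * x.imK := by
    rw [Quaternion.coe_mul_eq_smul]; simp [Quaternion.imK_smul, smul_eq_mul]
  obtain ⟨a,b,c,d,h1,h2,h3,h4⟩ | ⟨a,b,c,d,h1,h2,h3,h4⟩ := hx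
  · refine Or.inl ⟨(2*k+1)*a, (2*k+1)*b, (2*k+1)*c, (2*k+1)*d, ?_, ?_, ?_, ?_⟩
    · rw [hre, h1]; push_cast; ring
    · rw [himI, h2]; push_cast; ring
    · rw [himJ, h3]; push_cast; ring
    · rw [himK, h4]; push_cast; ring
  · refine Or.inr ⟨(2*k+1)*a + k, (2*k+1)*b + k, (2*k+1)*c + k, (2*k+1)*d + k,
      ?_, ?_, ?_, ?_⟩
    · rw [hre, h1]; push_cast; ring
    · rw [himI, h2]; push_cast; ring
    · rw [himJ, h3]; push_cast; ring
    · rw [himK, h4]; push_cast; ring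


end Aux

/-- Dirichlet's theorem for quaternions: infinitely many good approximants. -/
theorem quaternionic_dirichlet_infinite (ξ : Quaternion ℝ) :
    {pq : Quaternion ℝ × Quaternion ℝ | IsHurwitz pq.1 ∧ IsHurwitz pq.2 ∧ pq.2 ≠ 0 ∧
      ‖ξ - pq.1 * pq.2⁻¹‖ < 2 / ‖pq.2‖ ^ 2}.Infinite := by
  set T := {pq : Quaternion ℝ × Quaternion ℝ | IsHurwitz pq.1 ∧ IsHurwitz pq.2 ∧ pq.2 ≠ 0 ∧
      ‖ξ - pq.1 * pq.2⁻¹‖ < 2 / ‖pq.2‖ ^ 2} with hT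
  have existsElem : ∀ M : ℕ, 100 ≤ M →
      ∃ pq : Quaternion ℝ × Quaternion ℝ, pq ∈ T ∧ ‖ξ - pq.1 * pq.2⁻¹‖ < 1 / M := by
    intro M hM
    obtain ⟨p, q, hpH, hqH, hq0, hqle, hlt⟩ := dirichlet_step ξ M hM
    have hM0 : (0:ℝ) < M := by
      have : (100:ℝ) ≤ M := by exact_mod_cast hM
      linarith
    have hq1 : 1 ≤ ‖q‖ := hqH.one_le_norm hq0
    have hqpos : (0:ℝ) < ‖q‖ := by linarith
    have heq : (ξ * q - p) * q⁻¹ = ξ - p * q⁻¹ := by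
      rw [sub_mul, mul_assoc, mul_inv_cancel₀ hq0, mul_one]
    have hnorm : ‖ξ - p * q⁻¹‖ = ‖ξ * q - p‖ / ‖q‖ := by
      rw [← heq, norm_mul, norm_inv, div_eq_mul_inv]
    have hlt2 : ‖ξ - p * q⁻¹‖ < (1/(M:ℝ)) / ‖q‖ := by
      rw [hnorm]
      gcongr
    have h3 : (1/(M:ℝ)) / ‖q‖ ≤ 2 / ‖q‖ ^ 2 := by
      rw [div_le_div_iff₀ (by positivity) (by positivity)]
      nlinarith [mul_le_mul_of_nonneg_right (mul_le_mul_of_nonneg_right hqle (norm_nonneg q))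
          (le_of_lt (one_div_pos.mpr hM0)),
        mul_one_div_cancel (ne_of_gt hM0)]
    have h4 : (1/(M:ℝ)) / ‖q‖ ≤ 1/(M:ℝ) := by
      apply div_le_self (by positivity) hq1
    refine ⟨(p, q), ⟨hpH, hqH, hq0, ?_⟩, by dsimp only; linarith⟩
    dsimp only
    linarith
  by_cases hrat : ∃ p₀ q₀ : Quaternion ℝ, IsHurwitz p₀ ∧ IsHurwitz q₀ ∧ q₀ ≠ 0 ∧
      ξ = p₀ * q₀⁻¹
  · obtain ⟨p₀, q₀, hp₀, hq₀, hq₀0, hξ⟩ := hrat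
    set f : ℕ → Quaternion ℝ × Quaternion ℝ := fun k =>
      (((2 * (k:ℝ) + 1 : ℝ) : Quaternion ℝ) * p₀, ((2 * (k:ℝ) + 1 : ℝ) : Quaternion ℝ) * q₀)
      with hf
    have hc0 : ∀ k : ℕ, ((2 * (k:ℝ) + 1 : ℝ) : Quaternion ℝ) ≠ 0 := by
      intro k h
      have h2 : (2 * (k:ℝ) + 1 : ℝ) = 0 := by
        exact Quaternion.coe_injective (h.trans Quaternion.coe_zero.symm)
      have : (0:ℝ) ≤ (k:ℝ) := Nat.cast_nonneg k
      linarith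
    have hmem : ∀ k : ℕ, f k ∈ T := by
      intro k
      set c : Quaternion ℝ := ((2 * (k:ℝ) + 1 : ℝ) : Quaternion ℝ) with hcdef
      have hq0 : c * q₀ ≠ 0 := mul_ne_zero (hc0 k) hq₀0
      have hratio : (c * p₀) * (c * q₀)⁻¹ = p₀ * q₀⁻¹ := by
        rw [mul_inv_rev, ← mul_assoc, mul_assoc c p₀ q₀⁻¹,
          Quaternion.coe_commutes (2 * (k:ℝ) + 1 : ℝ) (p₀ * q₀⁻¹),
          mul_assoc, mul_inv_cancel₀ (hc0 k), mul_one]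
      refine ⟨hp₀.odd_mul k, hq₀.odd_mul k, hq0, ?_⟩
      rw [hratio, ← hξ, sub_self, norm_zero]
      have hnq : 0 < ‖c * q₀‖ := norm_pos_iff.mpr hq0
      positivity
    have hinj : Function.Injective f := by
      intro k j h
      have h2 : ((2 * (k:ℝ) + 1 : ℝ) : Quaternion ℝ) * q₀ =
          ((2 * (j:ℝ) + 1 : ℝ) : Quaternion ℝ) * q₀ := congrArg Prod.snd h
      have h3 : (((2 * (k:ℝ) + 1 : ℝ) : Quaternion ℝ) -
          ((2 * (j:ℝ) + 1 : ℝ) : Quaternion ℝ)) * q₀ = 0 := by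
        rw [sub_mul, h2, sub_self]
      rcases mul_eq_zero.mp h3 with h4 | h4
      · have h5 : ((2 * (k:ℝ) + 1 : ℝ) : Quaternion ℝ) =
            ((2 * (j:ℝ) + 1 : ℝ) : Quaternion ℝ) := by
          rwa [sub_eq_zero] at h4
        have h6 : (2 * (k:ℝ) + 1 : ℝ) = 2 * (j:ℝ) + 1 := Quaternion.coe_injective h5
        have : (k:ℝ) = j := by linarith
        exact_mod_cast this
      · exact absurd h4 hq₀0
    exact Set.infinite_of_injective_forall_mem hinj hmem
  · by_contra hfin
    rw [Set.not_infinite] at hfin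
    obtain ⟨pq₀, hpq₀, -⟩ := existsElem 100 (by norm_num)
    obtain ⟨a, ha, hamin⟩ := hfin.toFinset.exists_min_image
      (fun pq => ‖ξ - pq.1 * pq.2⁻¹‖) ⟨pq₀, hfin.mem_toFinset.mpr hpq₀⟩
    have haT : a ∈ T := hfin.mem_toFinset.mp ha
    push_neg at hrat
    have hne : ξ ≠ a.1 * a.2⁻¹ := hrat a.1 a.2 haT.1 haT.2.1 haT.2.2.1
    have hpos : 0 < ‖ξ - a.1 * a.2⁻¹‖ := by
      rw [norm_pos_iff]
      exact sub_ne_zero.mpr hne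
    obtain ⟨n, hn⟩ := exists_nat_gt (max 100 (1 / ‖ξ - a.1 * a.2⁻¹‖))
    have hn100 : 100 ≤ n := by
      have h1 : (100:ℝ) ≤ n := le_of_lt ((le_max_left _ _).trans_lt hn)
      exact_mod_cast h1
    have hnpos : (0:ℝ) < n := by
      have : (100:ℝ) ≤ n := by exact_mod_cast hn100
      linarith
    obtain ⟨pq, hpqT, hpqlt⟩ := existsElem n hn100
    have h2 : 1 / ‖ξ - a.1 * a.2⁻¹‖ < n := (le_max_right _ _).trans_lt hn
    have h1 : 1/(n:ℝ) < ‖ξ - a.1 * a.2⁻¹‖ := by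
      have h3 := (div_lt_iff₀ hpos).mp h2
      rw [div_lt_iff₀ hnpos]
      nlinarith
    have h5 : ‖ξ - a.1 * a.2⁻¹‖ ≤ ‖ξ - pq.1 * pq.2⁻¹‖ :=
      hamin pq (hfin.mem_toFinset.mpr hpqT)
    linarith
end

section
/- Let s ∈ (0,4) and Ψ : ℕ → (0,∞) be such that ∑_{m=1}^∞ m⁷·Ψ(m)^s < ∞. Then the set 𝒱(Ψ) of ξ in the closed fundamental domain Δ̄ with |ξ − p·q⁻¹|₂ < Ψ(⌊|q|₂⌋) for infinitely many Hurwitz integer pairs (p,q), q ≠ 0, has Hausdorff s-measure zero. -/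
open MeasureTheory Metric Filter Set Quaternion
open scoped ENNReal Topology

/-- The set of `Ψ`-approximable quaternions in the closed fundamental domain. -/
def VSet (Ψ : ℕ → ℝ) : Set (Quaternion ℝ) :=
  {ξ | ξ ∈ fundDomCl ∧ {pq : Quaternion ℝ × Quaternion ℝ | IsHurwitz pq.1 ∧ IsHurwitz pq.2 ∧
    pq.2 ≠ 0 ∧ ‖ξ - pq.1 * pq.2⁻¹‖ < Ψ ⌊‖pq.2‖⌋₊}.Infinite}


noncomputable def quatLinTuple : ℍ ≃ₗ[ℝ] (Fin 4 → ℝ) :=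
  QuaternionAlgebra.linearEquivTuple (-1:ℝ) 0 (-1)

lemma coe_quatLinTuple_symm : ⇑quatLinTuple.symm = (Quaternion.equivTuple ℝ).symm :=
  QuaternionAlgebra.coe_linearEquivTuple_symm (-1:ℝ) 0 (-1)

instance : FiniteDimensional ℝ ℍ := Module.Finite.equiv quatLinTuple.symm

instance : (volume : Measure ℍ).IsAddHaarMeasure := by
  have : (volume : Measure ℍ) = Measure.map quatLinTuple.symm volume := by
    show Measure.map _ volume = _
    rw [coe_quatLinTuple_symm]
  rw [this]
  exact Measure.MapLinearEquiv.isAddHaarMeasure _ _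


lemma norm_sq_eq (a : ℍ) : ‖a‖^2 = a.re^2 + a.imI^2 + a.imJ^2 + a.imK^2 := by
  rw [sq, ← Quaternion.normSq_eq_norm_mul_self, Quaternion.normSq_def']

lemma hurwitz_zero : IsHurwitz 0 := Or.inl ⟨0,0,0,0, by simp⟩

lemma int_half_sq (A : ℤ) : (1/4:ℝ) ≤ ((A:ℝ)+1/2)^2 := by
  have h : (0:ℤ) ≤ A*(A+1) := by
    rcases le_or_gt 0 A with h|h
    · positivity
    · nlinarith [mul_nonneg (by omega : (0:ℤ) ≤ -A) (by omega : (0:ℤ) ≤ -(A+1))]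
  have h' : (0:ℝ) ≤ (A:ℝ)*((A:ℝ)+1) := by exact_mod_cast h
  nlinarith

lemma int_sq (A : ℤ) (h : A ≠ 0) : (1:ℝ) ≤ ((A:ℝ))^2 := by
  have : (1:ℤ) ≤ A^2 := by rcases h.lt_or_gt with h|h <;> nlinarith
  exact_mod_cast this

lemma sum_sq_ge {A B C D : ℤ} (h : ¬(A = 0 ∧ B = 0 ∧ C = 0 ∧ D = 0)) :
    (1:ℝ) ≤ ((A:ℝ))^2 + ((B:ℝ))^2 + ((C:ℝ))^2 + ((D:ℝ))^2 := by
  have hA := sq_nonneg (A:ℝ); have hB := sq_nonneg (B:ℝ)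
  have hC := sq_nonneg (C:ℝ); have hD := sq_nonneg (D:ℝ)
  by_cases h1 : A = 0
  · by_cases h2 : B = 0
    · by_cases h3 : C = 0
      · have h4 : D ≠ 0 := by tauto
        nlinarith [int_sq D h4]
      · nlinarith [int_sq C h3]
    · nlinarith [int_sq B h2]
  · nlinarith [int_sq A h1]

lemma hurwitz_sep {x y : ℍ} (hx : IsHurwitz x) (hy : IsHurwitz y) (hxy : x ≠ y) :
    1 ≤ ‖x - y‖ := by
  have hne : x - y ≠ 0 := sub_ne_zero.2 hxy
  have key : 1 ≤ ‖x - y‖^2 := by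
    rw [norm_sq_eq, Quaternion.re_sub, Quaternion.imI_sub, Quaternion.imJ_sub,
      Quaternion.imK_sub]
    rcases hx with ⟨a,b,c,d,h1,h2,h3,h4⟩|⟨a,b,c,d,h1,h2,h3,h4⟩ <;>
      rcases hy with ⟨a',b',c',d',g1,g2,g3,g4⟩|⟨a',b',c',d',g1,g2,g3,g4⟩ <;>
      rw [h1,h2,h3,h4,g1,g2,g3,g4]
    · have hnz : ¬(a - a' = 0 ∧ b - b' = 0 ∧ c - c' = 0 ∧ d - d' = 0) := by
        rintro ⟨z1,z2,z3,z4⟩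
        have za : (a:ℝ) = a' := by exact_mod_cast (show a = a' by omega)
        have zb : (b:ℝ) = b' := by exact_mod_cast (show b = b' by omega)
        have zc : (c:ℝ) = c' := by exact_mod_cast (show c = c' by omega)
        have zd : (d:ℝ) = d' := by exact_mod_cast (show d = d' by omega)
        refine hxy ?_
        ext
        · rw [h1,g1,za]
        · rw [h2,g2,zb]
        · rw [h3,g3,zc]
        · rw [h4,g4,zd]
      have := sum_sq_ge hnz
      push_cast at this ⊢
      nlinarith [this]
    · have e := sum_sq_ge (A := a-a'-1) (B := b-b'-1) (C := c-c'-1) (D := d-d'-1)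
      have i1 := int_half_sq (a-a'-1); have i2 := int_half_sq (b-b'-1)
      have i3 := int_half_sq (c-c'-1); have i4 := int_half_sq (d-d'-1)
      push_cast at i1 i2 i3 i4
      nlinarith [i1,i2,i3,i4]
    · have i1 := int_half_sq (a-a'); have i2 := int_half_sq (b-b')
      have i3 := int_half_sq (c-c'); have i4 := int_half_sq (d-d')
      push_cast at i1 i2 i3 i4
      nlinarith [i1,i2,i3,i4]
    · have hnz : ¬(a - a' = 0 ∧ b - b' = 0 ∧ c - c' = 0 ∧ d - d' = 0) := by
        rintro ⟨z1,z2,z3,z4⟩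
        have za : (a:ℝ) = a' := by exact_mod_cast (show a = a' by omega)
        have zb : (b:ℝ) = b' := by exact_mod_cast (show b = b' by omega)
        have zc : (c:ℝ) = c' := by exact_mod_cast (show c = c' by omega)
        have zd : (d:ℝ) = d' := by exact_mod_cast (show d = d' by omega)
        refine hxy ?_
        ext
        · rw [h1,g1,za]
        · rw [h2,g2,zb]
        · rw [h3,g3,zc]
        · rw [h4,g4,zd]
      have := sum_sq_ge hnz
      push_cast at this ⊢
      nlinarith [this]
  nlinarith [norm_nonneg (x - y)]

lemma hurwitz_countable : {x : ℍ | IsHurwitz x}.Countable := by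
  have h : {x : ℍ | IsHurwitz x} ⊆
      range (fun t : (ℤ×ℤ×ℤ×ℤ)×Bool =>
        (⟨t.1.1 + (cond t.2 (1/2) 0), t.1.2.1 + (cond t.2 (1/2) 0),
          t.1.2.2.1 + (cond t.2 (1/2) 0), t.1.2.2.2 + (cond t.2 (1/2) 0)⟩ : ℍ)) := by
    rintro x (⟨a,b,c,d,h1,h2,h3,h4⟩|⟨a,b,c,d,h1,h2,h3,h4⟩)
    · refine ⟨((a,b,c,d), false), ?_⟩
      ext <;> simp [h1,h2,h3,h4]
    · refine ⟨((a,b,c,d), true), ?_⟩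
      ext <;> simp [h1,h2,h3,h4]
  exact (countable_range _).mono h

/-- Unit-ball volume of the quaternions. -/
noncomputable def ubvol : ENNReal := volume (ball (0:ℍ) 1)

lemma vol_closedBall {r : ℝ} (hr : 0 ≤ r) :
    volume (closedBall (0:ℍ) r) = ENNReal.ofReal (r^4) * ubvol := by
  rw [ubvol, Measure.addHaar_closedBall _ _ hr, Quaternion.finrank_eq_four]

lemma vol_ball {r : ℝ} (hr : 0 ≤ r) :
    volume (ball (0:ℍ) r) = ENNReal.ofReal (r^4) * ubvol := by
  rw [ubvol, Measure.addHaar_ball _ _ hr, Quaternion.finrank_eq_four]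

lemma ubvol_pos : 0 < ubvol := measure_ball_pos _ _ one_pos

lemma ubvol_lt_top : ubvol < ⊤ := measure_ball_lt_top

/-- Packing bound: a set of Hurwitz integers whose (1/2)-balls fit inside a region of volume
at most `n` times the volume of a (1/2)-ball has at most `n` elements. -/
lemma hurwitz_count {S W : Set ℍ} (hS : ∀ x ∈ S, IsHurwitz x)
    (hSW : ∀ x ∈ S, ball x 2⁻¹ ⊆ W) {n : ℕ}
    (hW : volume W ≤ n * volume (ball (0:ℍ) 2⁻¹)) : S.Finite ∧ S.ncard ≤ n := by
  set v := volume (ball (0:ℍ) 2⁻¹) with hv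
  have hv0 : v ≠ 0 := (measure_ball_pos _ _ (by norm_num)).ne'
  have hvt : v ≠ ⊤ := measure_ball_lt_top.ne
  have key : ∀ F : Finset ℍ, ↑F ⊆ S → F.card ≤ n := by
    intro F hF
    have hdisj : (F : Set ℍ).Pairwise (Function.onFun Disjoint fun x => ball x 2⁻¹) := by
      intro x hx y hy hxy
      have h1 : (1:ℝ) ≤ dist x y := by
        rw [dist_eq_norm]; exact hurwitz_sep (hS x (hF hx)) (hS y (hF hy)) hxy
      exact ball_disjoint_ball (by linarith)
    have hum : volume (⋃ x ∈ F, ball x 2⁻¹) = ∑ x ∈ F, volume (ball x 2⁻¹) :=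
      measure_biUnion_finset hdisj fun x _ => measurableSet_ball
    have hsum : ∑ x ∈ F, volume (ball x 2⁻¹) = F.card * v := by
      rw [Finset.sum_congr rfl fun x _ => Measure.addHaar_ball_center volume x 2⁻¹]
      simp [mul_comm, hv]
    have hle : (F.card : ENNReal) * v ≤ n * v := by
      rw [← hsum, ← hum]
      refine le_trans (measure_mono ?_) hW
      exact iUnion₂_subset fun x hx => hSW x (hF hx)
    have := (ENNReal.mul_le_mul_iff_left hv0 hvt).1 hle
    exact_mod_cast this
  have hfin : S.Finite := by
    by_contra h
    rw [← Set.not_infinite, not_not] at h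
    obtain ⟨F, hFS, hcard⟩ := h.exists_subset_card_eq (n+1)
    have := key F hFS
    omega
  refine ⟨hfin, ?_⟩
  rw [Set.ncard_eq_toFinset_card S hfin]
  exact key _ (by simp)

lemma count_closedBall {r : ℝ} (hr : 0 ≤ r) {n : ℕ} (hn : (2*r+1)^4 ≤ n) :
    ({x : ℍ | IsHurwitz x} ∩ closedBall 0 r).Finite ∧
      ({x : ℍ | IsHurwitz x} ∩ closedBall 0 r).ncard ≤ n := by
  refine hurwitz_count (fun x hx => hx.1) (W := closedBall 0 (r + 2⁻¹)) ?_ ?_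
  · intro x hx y hy
    have h1 : dist x 0 ≤ r := mem_closedBall.1 hx.2
    have h2 : dist y x < 2⁻¹ := mem_ball.1 hy
    have := dist_triangle y x 0
    exact mem_closedBall.2 (by linarith)
  · rw [vol_closedBall (by linarith), vol_ball (by norm_num), ← mul_assoc,
      ← ENNReal.ofReal_natCast n, ← ENNReal.ofReal_mul (by positivity)]
    refine mul_le_mul_left (ENNReal.ofReal_le_ofReal ?_) _
    nlinarith

lemma count_shell {m : ℕ} (hm : 1 ≤ m) :
    ({x : ℍ | IsHurwitz x} ∩ {x | (m:ℝ) ≤ ‖x‖ ∧ ‖x‖ < m+1}).Finite ∧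
      ({x : ℍ | IsHurwitz x} ∩ {x | (m:ℝ) ≤ ‖x‖ ∧ ‖x‖ < m+1}).ncard ≤ 640 * m^3 := by
  have hm1 : (1:ℝ) ≤ m := by exact_mod_cast hm
  refine hurwitz_count (fun x hx => hx.1)
    (W := closedBall (0:ℍ) ((m:ℝ) + 3/2) \ ball (0:ℍ) ((m:ℝ) - 1/2)) ?_ ?_
  · intro x hx y hy
    have h2 : dist y x < 2⁻¹ := mem_ball.1 hy
    have h3 := dist_triangle y x 0
    have h4 := dist_triangle x y 0
    have hx1 : dist x 0 = ‖x‖ := dist_zero_right x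
    have hy1 : dist y 0 = ‖y‖ := dist_zero_right y
    have hxy : dist x y = dist y x := dist_comm x y
    constructor
    · exact mem_closedBall.2 (by rw [hy1]; rw [hx1] at h3; linarith [hx.2.2])
    · simp only [mem_ball, not_lt]
      rw [hx1] at h4; rw [hy1]; rw [hxy] at h4
      linarith [hx.2.1]
  · have hd : volume (closedBall (0:ℍ) ((m:ℝ) + 3/2) \ ball (0:ℍ) ((m:ℝ) - 1/2))
        = volume (closedBall (0:ℍ) ((m:ℝ) + 3/2)) - volume (ball (0:ℍ) ((m:ℝ) - 1/2)) := by
      refine measure_diff (fun y hy => ?_) measurableSet_ball.nullMeasurableSet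
        measure_ball_lt_top.ne
      have := mem_ball.1 hy
      exact mem_closedBall.2 (by linarith)
    rw [hd, vol_closedBall (by linarith), vol_ball (by linarith),
      vol_ball (by norm_num : (0:ℝ) ≤ 2⁻¹), ← ENNReal.sub_mul (fun _ _ => ubvol_lt_top.ne),
      ← ENNReal.ofReal_sub _ (by positivity), ← mul_assoc,
      ← ENNReal.ofReal_natCast, ← ENNReal.ofReal_mul (by positivity)]
    refine mul_le_mul_left (ENNReal.ofReal_le_ofReal ?_) _
    push_cast
    have e2 : (m:ℝ)^2 ≤ (m:ℝ)^3 := by nlinarith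
    have e1 : (m:ℝ) ≤ (m:ℝ)^3 := by nlinarith
    have e0 : (1:ℝ) ≤ (m:ℝ)^3 := by nlinarith
    nlinarith



lemma norm_hurwitz_ge_one {q : ℍ} (hq : IsHurwitz q) (h0 : q ≠ 0) : 1 ≤ ‖q‖ := by
  have := hurwitz_sep hq hurwitz_zero h0
  simpa using this

/-- Hurwitz pairs `(p, q)` with `⌊‖q‖⌋₊ = m` and `‖p * q⁻¹‖ ≤ R`. -/
def pairSet (R : ℝ) (m : ℕ) : Set (ℍ × ℍ) :=
  {pq | IsHurwitz pq.1 ∧ IsHurwitz pq.2 ∧ pq.2 ≠ 0 ∧ ‖pq.1 * pq.2⁻¹‖ ≤ R ∧ ⌊‖pq.2‖⌋₊ = m}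

lemma pairSet_subset {R : ℝ} (hR : 0 ≤ R) (m : ℕ) :
    pairSet R m ⊆ ({x : ℍ | IsHurwitz x} ∩ closedBall 0 (R*((m:ℝ)+1))) ×ˢ
      ({x : ℍ | IsHurwitz x} ∩ {x | (m:ℝ) ≤ ‖x‖ ∧ ‖x‖ < m+1}) := by
  rintro ⟨p,q⟩ ⟨hp, hq, hq0, hpq, hfl⟩
  have h1 : (m:ℝ) ≤ ‖q‖ := hfl ▸ Nat.floor_le (norm_nonneg q)
  have h2 : ‖q‖ < (m:ℝ) + 1 := by
    have := Nat.lt_succ_floor ‖q‖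
    rw [hfl] at this
    exact_mod_cast this
  refine ⟨⟨hp, ?_⟩, hq, h1, h2⟩
  have hpe : p = p * q⁻¹ * q := (inv_mul_cancel_right₀ hq0 p).symm
  have : ‖p‖ ≤ R * ((m:ℝ)+1) := by
    calc ‖p‖ = ‖p * q⁻¹‖ * ‖q‖ := by conv_lhs => rw [hpe, norm_mul]
    _ ≤ R * ((m:ℝ)+1) := mul_le_mul hpq h2.le (norm_nonneg q) hR
  simpa [mem_closedBall, dist_zero_right] using this

lemma pairSet_count {R : ℝ} (hR : 0 ≤ R) {m : ℕ} (hm : 1 ≤ m) :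
    (pairSet R m).Finite ∧
      (pairSet R m).ncard ≤ (640 * ⌈(4*R+1)^4⌉₊) * m^7 := by
  have hm1 : (1:ℝ) ≤ m := by exact_mod_cast hm
  have hball := count_closedBall (r := R*((m:ℝ)+1)) (by positivity)
    (n := ⌈(4*R+1)^4⌉₊ * m^4) (by
      push_cast
      have h1 := Nat.le_ceil ((4*R+1)^4)
      have h2 : 2*(R*((m:ℝ)+1))+1 ≤ (4*R+1)*m := by nlinarith
      calc (2*(R*((m:ℝ)+1))+1)^4 ≤ ((4*R+1)*(m:ℝ))^4 := by
            apply pow_le_pow_left₀ (by positivity) h2 4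
      _ = (4*R+1)^4 * (m:ℝ)^4 := by ring
      _ ≤ ⌈(4*R+1)^4⌉₊ * (m:ℝ)^4 := by nlinarith [pow_nonneg (le_trans zero_le_one hm1) 4]
      )
  have hshell := count_shell hm
  have hsub := pairSet_subset hR m
  have hfin : (pairSet R m).Finite := ((hball.1.prod hshell.1).subset hsub)
  refine ⟨hfin, ?_⟩
  have hprod : (({x : ℍ | IsHurwitz x} ∩ closedBall 0 (R*((m:ℝ)+1))) ×ˢ
      ({x : ℍ | IsHurwitz x} ∩ {x | (m:ℝ) ≤ ‖x‖ ∧ ‖x‖ < m+1})).ncard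
      = ({x : ℍ | IsHurwitz x} ∩ closedBall 0 (R*((m:ℝ)+1))).ncard *
        ({x : ℍ | IsHurwitz x} ∩ {x | (m:ℝ) ≤ ‖x‖ ∧ ‖x‖ < m+1}).ncard := by
    rw [← Nat.card_coe_set_eq, ← Nat.card_coe_set_eq, ← Nat.card_coe_set_eq,
      Nat.card_congr (Equiv.Set.prod _ _), Nat.card_prod]
  calc (pairSet R m).ncard ≤ _ := Set.ncard_le_ncard hsub (hball.1.prod hshell.1)
  _ = _ := hprod
  _ ≤ (⌈(4*R+1)^4⌉₊ * m^4) * (640 * m^3) := Nat.mul_le_mul hball.2 hshell.2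
  _ = (640 * ⌈(4*R+1)^4⌉₊) * m^7 := by ring

/-- Convergence part of Jarník's theorem. -/
theorem quaternionic_jarnik_convergence (s : ℝ) (hs0 : 0 < s) (hs4 : s < 4)
    (Ψ : ℕ → ℝ) (hΨ : ∀ m, 0 < Ψ m)
    (hsum : Summable fun m : ℕ => (m : ℝ) ^ 7 * Ψ m ^ s) :
    μH[s] (VSet Ψ) = 0 := by
  classical
  set f : ℕ → ℝ := fun m => (m:ℝ)^7 * Ψ m ^ s with hf
  have hf0 : ∀ m, 0 ≤ f m := fun m => mul_nonneg (by positivity) (Real.rpow_nonneg (hΨ m).le s)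
  set T : ℝ := max (∑' m, f m) 1 with hT
  have hT1 : (1:ℝ) ≤ T := le_max_right _ _
  have hT0 : (0:ℝ) < T := lt_of_lt_of_le one_pos hT1
  have hfT : ∀ m, f m ≤ T := fun m => le_max_of_le_left (hsum.le_tsum m fun _ _ => hf0 _)
  set D : ℝ := T ^ (1/s) with hD
  have hD0 : (0:ℝ) < D := Real.rpow_pos_of_pos hT0 _
  have hψle : ∀ m : ℕ, 1 ≤ m → Ψ m ≤ D / (m:ℝ) ^ ((7:ℝ)/s) := by
    intro m hm
    have hm0 : (0:ℝ) < m := by exact_mod_cast hm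
    have h1 : Ψ m ^ s ≤ T / (m:ℝ)^(7:ℕ) := by
      rw [le_div_iff₀ (by positivity)]
      calc Ψ m ^ s * (m:ℝ)^(7:ℕ) = f m := by rw [hf]; ring
      _ ≤ T := hfT m
    have h2 : (Ψ m ^ s) ^ (1/s) ≤ (T / (m:ℝ)^(7:ℕ)) ^ (1/s) :=
      Real.rpow_le_rpow (Real.rpow_nonneg (hΨ m).le s) h1 (by positivity)
    have hL : (Ψ m ^ s) ^ (1/s) = Ψ m := by
      rw [← Real.rpow_mul (hΨ m).le, mul_one_div_cancel hs0.ne', Real.rpow_one]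
    have hRe : ((m:ℝ)^(7:ℕ)) ^ ((1:ℝ)/s) = (m:ℝ) ^ ((7:ℝ)/s) := by
      rw [← Real.rpow_natCast (m:ℝ) 7, ← Real.rpow_mul hm0.le, mul_one_div]
      norm_num
    rw [hL, Real.div_rpow hT0.le (by positivity), hRe] at h2
    exact h2
  have hDdiv : ∀ m : ℕ, 1 ≤ m → D / (m:ℝ) ^ ((7:ℝ)/s) ≤ D := by
    intro m hm
    have hm1 : (1:ℝ) ≤ m := by exact_mod_cast hm
    have h1 : (1:ℝ) ≤ (m:ℝ) ^ ((7:ℝ)/s) := by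
      have := Real.rpow_le_rpow (by norm_num) hm1 (by positivity : (0:ℝ) ≤ 7/s)
      rwa [Real.one_rpow] at this
    exact div_le_self hD0.le h1
  have hψD : ∀ m : ℕ, 1 ≤ m → Ψ m ≤ D := fun m hm => (hψle m hm).trans (hDdiv m hm)
  set R : ℝ := 2 + D with hRdef
  have hR0 : (0:ℝ) ≤ R := by simp [hRdef]; linarith
  set K : ℕ := 640 * ⌈(4*R+1)^4⌉₊ with hK
  set c : ℕ → ℝ≥0∞ := fun m => (K:ℝ≥0∞) * ENNReal.ofReal ((m:ℝ)^7 * (2 * Ψ m)^s) with hc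
  have hcnn : ∀ m : ℕ, 0 ≤ (m:ℝ)^7 * (2 * Ψ m)^s :=
    fun m => mul_nonneg (by positivity) (Real.rpow_nonneg (by linarith [hΨ m]) s)
  have hc_sum : ∑' m, c m ≠ ⊤ := by
    have hsum2 : Summable (fun m : ℕ => (m:ℝ)^7 * (2*Ψ m)^s) := by
      refine (hsum.mul_left ((2:ℝ)^s)).congr fun m => ?_
      rw [Real.mul_rpow (by norm_num) (hΨ m).le]
      simp [hf]; ring
    rw [hc]
    simp only []
    rw [ENNReal.tsum_mul_left, ← ENNReal.ofReal_tsum_of_nonneg hcnn hsum2]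
    exact ENNReal.mul_ne_top (ENNReal.natCast_ne_top K) ENNReal.ofReal_ne_top
  -- the covering sets
  set 𝒜 : ℕ → Set (ℍ × ℍ) := fun N => ⋃ k : ℕ, pairSet R (k + N) with h𝒜
  haveI hcountable : ∀ N, Countable (𝒜 N) := by
    intro N
    have hsub : 𝒜 N ⊆ {x : ℍ | IsHurwitz x} ×ˢ {x : ℍ | IsHurwitz x} := by
      refine iUnion_subset fun k => ?_
      rintro ⟨p,q⟩ ⟨hp,hq,_⟩
      exact ⟨hp,hq⟩
    exact ((hurwitz_countable.prod hurwitz_countable).mono hsub).to_subtype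
  set t : ∀ N : ℕ, ↥(𝒜 N) → Set ℍ :=
    fun N i => ball (i.1.1 * i.1.2⁻¹) (Ψ ⌊‖i.1.2‖⌋₊) with htdef
  set r : ℕ → ℝ≥0∞ := fun N => ENNReal.ofReal (2 * (D / (N:ℝ) ^ ((7:ℝ)/s))) with hrdef
  have hr : Tendsto r atTop (𝓝 0) := by
    have h1 : Tendsto (fun x : ℝ => x ^ ((7:ℝ)/s)) atTop atTop :=
      tendsto_rpow_atTop (by positivity)
    have h2 : Tendsto (fun N : ℕ => ((N:ℝ)) ^ ((7:ℝ)/s)) atTop atTop :=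
      h1.comp tendsto_natCast_atTop_atTop
    have h3 : Tendsto (fun N : ℕ => 2 * (D / (N:ℝ) ^ ((7:ℝ)/s))) atTop (𝓝 0) := by
      have h4 := h2.inv_tendsto_atTop
      have h5 := h4.const_mul (2*D)
      rw [mul_zero] at h5
      refine h5.congr fun N => ?_
      simp only [Pi.inv_apply]
      rw [div_eq_mul_inv]
      ring
    have h6 := (ENNReal.continuous_ofReal.tendsto 0).comp h3
    rw [ENNReal.ofReal_zero] at h6
    exact h6
  -- diameter bound for the covering balls
  have hdiam : ∀ N, ∀ i : ↥(𝒜 N), EMetric.diam (t N i) ≤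
      ENNReal.ofReal (2 * Ψ ⌊‖i.1.2‖⌋₊) := by
    intro N i
    rw [htdef]
    simp only []
    rw [← Metric.emetric_ball]
    refine le_trans EMetric.diam_ball (le_of_eq ?_)
    rw [ENNReal.ofReal_mul (by norm_num : (0:ℝ) ≤ 2)]
    norm_num
  have ht : ∀ᶠ N in atTop, ∀ i : ↥(𝒜 N), EMetric.diam (t N i) ≤ r N := by
    filter_upwards [eventually_ge_atTop 1] with N hN i
    have hN0 : (0:ℝ) < N := by exact_mod_cast hN
    obtain ⟨k, hk⟩ := mem_iUnion.1 i.2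
    obtain ⟨hp, hq, hq0, hpqR, hfl⟩ := hk
    refine le_trans (hdiam N i) (ENNReal.ofReal_le_ofReal ?_)
    have hm1 : 1 ≤ k + N := by omega
    have hNm : (N:ℝ) ≤ ((k+N : ℕ):ℝ) := by exact_mod_cast Nat.le_add_left N k
    have h5 : (N:ℝ)^((7:ℝ)/s) ≤ ((k+N:ℕ):ℝ)^((7:ℝ)/s) :=
      Real.rpow_le_rpow (Nat.cast_nonneg N) hNm (by positivity)
    have h6 : Ψ (k+N) ≤ D / (N:ℝ)^((7:ℝ)/s) :=
      (hψle _ hm1).trans (div_le_div_of_nonneg_left hD0.le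
        (Real.rpow_pos_of_pos hN0 _) h5)
    rw [hfl]
    linarith
  -- the covering property
  have hst : ∀ N : ℕ, VSet Ψ ⊆ ⋃ i : ↥(𝒜 N), t N i := by
    intro N ξ hξ
    obtain ⟨hdom, hinf⟩ := hξ
    have hξ2 : ‖ξ‖ ≤ 2 := by
      obtain ⟨a1,a2,a3,a4,a5,a6,a7,a8⟩ := hdom
      nlinarith [norm_sq_eq ξ, norm_nonneg ξ]
    set L : Set (ℍ × ℍ) := ({x : ℍ | IsHurwitz x} ∩ closedBall 0 (R*((N:ℝ)+1))) ×ˢ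
      ({x : ℍ | IsHurwitz x} ∩ closedBall 0 ((N:ℝ)+1)) with hL
    have hLfin : L.Finite :=
      ((count_closedBall (by positivity) (n := ⌈(2*(R*((N:ℝ)+1))+1)^4⌉₊) (Nat.le_ceil _)).1.prod
        (count_closedBall (by positivity) (n := ⌈(2*((N:ℝ)+1)+1)^4⌉₊) (Nat.le_ceil _)).1)
    obtain ⟨⟨p,q⟩, hmem, hnotL⟩ := (hinf.diff hLfin).nonempty
    obtain ⟨hp, hq, hq0, hdist⟩ := hmem
    have h1q : (1:ℝ) ≤ ‖q‖ := norm_hurwitz_ge_one hq hq0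
    have hm1 : 1 ≤ ⌊‖q‖⌋₊ := Nat.le_floor (by exact_mod_cast h1q)
    have hψm : Ψ ⌊‖q‖⌋₊ ≤ D := hψD _ hm1
    have hdist' : ‖ξ - p * q⁻¹‖ < Ψ ⌊‖q‖⌋₊ := hdist
    have hcen : ‖p * q⁻¹‖ ≤ R := by
      have h7 : ‖p * q⁻¹‖ ≤ ‖p * q⁻¹ - ξ‖ + ‖ξ‖ := by
        have := norm_add_le (p * q⁻¹ - ξ) ξ
        simpa using this
      have h8 : ‖p * q⁻¹ - ξ‖ = ‖ξ - p * q⁻¹‖ := norm_sub_rev _ _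
      rw [hRdef]
      linarith
    have hqN : N ≤ ⌊‖q‖⌋₊ := by
      by_contra hlt
      push_neg at hlt
      apply hnotL
      have hqn : ‖q‖ < (N:ℝ) := (Nat.floor_lt (norm_nonneg q)).1 hlt
      constructor
      · refine ⟨hp, ?_⟩
        simp only [mem_closedBall, dist_zero_right]
        have hpe : p = p * q⁻¹ * q := (inv_mul_cancel_right₀ hq0 p).symm
        calc ‖p‖ = ‖p * q⁻¹‖ * ‖q‖ := by conv_lhs => rw [hpe, norm_mul]
        _ ≤ R * ((N:ℝ)+1) := mul_le_mul hcen (by linarith) (norm_nonneg q) hR0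
      · exact ⟨hq, by simp only [mem_closedBall, dist_zero_right]; linarith⟩
    refine mem_iUnion.2 ⟨⟨(p,q), ?_⟩, ?_⟩
    · rw [h𝒜]
      refine mem_iUnion.2 ⟨⌊‖q‖⌋₊ - N, ⟨hp, hq, hq0, hcen, ?_⟩⟩
      simp only []
      omega
    · rw [htdef]
      simp only [mem_ball]
      rw [dist_eq_norm]
      exact hdist'
  -- apply the Hausdorff covering bound
  have hμ := MeasureTheory.Measure.hausdorffMeasure_le_liminf_tsum s (VSet Ψ) r hr t ht
    (Eventually.of_forall hst)
  -- bound the cover sums by tails of the convergent series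
  set g : ℍ × ℍ → ℝ≥0∞ := fun pq => ENNReal.ofReal ((2 * Ψ ⌊‖pq.2‖⌋₊)^s) with hg
  have hps : ∀ m : ℕ, 1 ≤ m → ∑' x : ↥(pairSet R m), g ↑x ≤ c m := by
    intro m hm
    obtain ⟨hfin, hcard⟩ := pairSet_count hR0 hm
    haveI := hfin.fintype
    have hval : ∀ x : ↥(pairSet R m), g ↑x = ENNReal.ofReal ((2*Ψ m)^s) := by
      rintro ⟨⟨p,q⟩, hx⟩
      simp only [hg]
      rw [hx.2.2.2.2]
    rw [tsum_fintype]
    calc ∑ x : ↥(pairSet R m), g ↑x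
        ≤ Finset.univ.card • ENNReal.ofReal ((2*Ψ m)^s) :=
          Finset.sum_le_card_nsmul _ _ _ (fun x _ => le_of_eq (hval x))
    _ = (Fintype.card ↥(pairSet R m) : ℝ≥0∞) * ENNReal.ofReal ((2*Ψ m)^s) := by
          rw [Finset.card_univ, nsmul_eq_mul]
    _ ≤ ((K * m^7 : ℕ) : ℝ≥0∞) * ENNReal.ofReal ((2*Ψ m)^s) := by
          refine mul_le_mul_left ?_ _
          have hcc : Fintype.card ↥(pairSet R m) = (pairSet R m).ncard := by
            rw [← Nat.card_coe_set_eq, Nat.card_eq_fintype_card]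
          exact_mod_cast hcc ▸ hcard
    _ = c m := by
          rw [hc]
          simp only []
          rw [ENNReal.ofReal_mul (by positivity), show ((m:ℝ)^7) = ((m^7:ℕ):ℝ) by push_cast; ring,
            ENNReal.ofReal_natCast, Nat.cast_mul, mul_assoc]
  have hTS : ∀ᶠ N in atTop,
      (∑' i : ↥(𝒜 N), EMetric.diam (t N i) ^ s) ≤ ∑' k, c (k + N) := by
    filter_upwards [eventually_ge_atTop 1] with N hN
    have hterm : ∀ i : ↥(𝒜 N), EMetric.diam (t N i) ^ s ≤ g ↑i := by
      intro i
      refine le_trans (ENNReal.rpow_le_rpow (hdiam N i) hs0.le) (le_of_eq ?_)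
      exact ENNReal.ofReal_rpow_of_nonneg (by linarith [hΨ ⌊‖(i.1).2‖⌋₊]) hs0.le
    calc ∑' i : ↥(𝒜 N), EMetric.diam (t N i) ^ s ≤ ∑' i : ↥(𝒜 N), g ↑i :=
          ENNReal.tsum_le_tsum hterm
    _ ≤ ∑' k, ∑' x : ↥(pairSet R (k + N)), g ↑x := ENNReal.tsum_iUnion_le_tsum g _
    _ ≤ ∑' k, c (k + N) := ENNReal.tsum_le_tsum fun k => hps (k+N) (by omega)
  have hlim : Tendsto (fun N => ∑' k, c (k + N)) atTop (𝓝 0) :=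
    ENNReal.tendsto_sum_nat_add c hc_sum
  have hliminf : liminf (fun N => ∑' i : ↥(𝒜 N), EMetric.diam (t N i) ^ s) atTop ≤
      liminf (fun N => ∑' k, c (k + N)) atTop := liminf_le_liminf hTS
  rw [hlim.liminf_eq] at hliminf
  exact le_antisymm (hμ.trans hliminf) zero_le
end

section
/- Let (B_i) be a sequence of balls in ℝⁿ with |B_i| → 0, and let U_i ⊆ B_i be Lebesgue measurable sets such that |U_i| ≥ c|B_i| for some constant c > 0 and all i. Then the limsup sets satisfy |limsup_i U_i| = |limsup_i B_i|. -/
open MeasureTheory Metric Filter Set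
open Topology

/-- If `U i ⊆ B i` are measurable sets occupying a fixed proportion of the measure of
balls `B i` whose measures tend to zero, then the limsup sets of the `U i` and of the
`B i` have the same Lebesgue measure. -/
theorem limsup_measure_eq_of_proportional (n : ℕ)
    (x : ℕ → EuclideanSpace ℝ (Fin n)) (r : ℕ → ℝ)
    (U : ℕ → Set (EuclideanSpace ℝ (Fin n))) (c : ℝ) (hc : 0 < c)
    (hvol : Tendsto (fun i => volume (ball (x i) (r i))) atTop (nhds 0))
    (hUB : ∀ i, U i ⊆ ball (x i) (r i))
    (hUm : ∀ i, MeasurableSet (U i))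
    (hlb : ∀ i, ENNReal.ofReal c * volume (ball (x i) (r i)) ≤ volume (U i)) :
    volume (⋂ N : ℕ, ⋃ i : ℕ, ⋃ _ : N ≤ i, U i) =
      volume (⋂ N : ℕ, ⋃ i : ℕ, ⋃ _ : N ≤ i, ball (x i) (r i)) := by
  classical
  set μ : Measure (EuclideanSpace ℝ (Fin n)) := volume with hμ
  set B : ℕ → Set (EuclideanSpace ℝ (Fin n)) := fun i => ball (x i) (r i) with hBdef
  set LU : Set (EuclideanSpace ℝ (Fin n)) := ⋂ N : ℕ, ⋃ i : ℕ, ⋃ _ : N ≤ i, U i with hLUdef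
  set LB : Set (EuclideanSpace ℝ (Fin n)) := ⋂ N : ℕ, ⋃ i : ℕ, ⋃ _ : N ≤ i, B i with hLBdef
  have hfr : Module.finrank ℝ (EuclideanSpace ℝ (Fin n)) = n := finrank_euclideanSpace_fin
  have hLUsub : LU ⊆ LB :=
    iInter_mono fun N => iUnion_mono fun i => iUnion_mono fun h => hUB i
  -- constants
  set C : ENNReal := μ (ball (0 : EuclideanSpace ℝ (Fin n)) 1) with hCdef
  have hC0 : C ≠ 0 := (measure_ball_pos μ (0 : EuclideanSpace ℝ (Fin n)) one_pos).ne'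
  have hCt : C ≠ ⊤ := measure_ball_lt_top.ne
  have hball : ∀ i, 0 < r i → μ (B i) = ENNReal.ofReal (r i ^ n) * C := by
    intro i hi
    rw [hBdef]
    rw [Measure.addHaar_ball_of_pos μ (x i) hi, hfr]
  have hcb : ∀ (d : EuclideanSpace ℝ (Fin n)) (ρ : ℝ), 0 ≤ ρ →
      μ (closedBall d ρ) = ENNReal.ofReal (ρ ^ n) * C := by
    intro d ρ hρ
    rw [Measure.addHaar_closedBall μ d hρ, hfr]
  -- Claim A: points of LB are in balls with arbitrarily small radius
  have claimA : ∀ d ∈ LB, ∀ δ : ℝ, 0 < δ → ∀ N : ℕ,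
      ∃ i, N ≤ i ∧ d ∈ B i ∧ 0 < r i ∧ r i < δ := by
    intro d hd δ hδ N
    have hε : (0 : ENNReal) < ENNReal.ofReal (δ ^ n) * C := by
      refine ENNReal.mul_pos ?_ hC0
      simp [ENNReal.ofReal_pos, pow_pos hδ]
    obtain ⟨M, hM⟩ := (Filter.tendsto_atTop'.1 hvol _ (Iio_mem_nhds hε)) -- Iio nbhd of 0
    have hd' : d ∈ ⋃ i : ℕ, ⋃ _ : max M N ≤ i, B i := by
      have := mem_iInter.1 hd (max M N); exact this
    obtain ⟨i, hi⟩ := mem_iUnion.1 hd'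
    obtain ⟨hiM, hdB⟩ := mem_iUnion.1 hi
    have hri : 0 < r i := by
      by_contra h
      push_neg at h
      rw [hBdef] at hdB
      simp only [ball_eq_empty.2 h] at hdB
      exact hdB
    refine ⟨i, le_trans (le_max_right _ _) hiM, hdB, hri, ?_⟩
    have hlt : μ (B i) < ENNReal.ofReal (δ ^ n) * C :=
      hM i (le_trans (le_max_left _ _) hiM)
    rw [hball i hri] at hlt
    have h1 : ENNReal.ofReal (r i ^ n) < ENNReal.ofReal (δ ^ n) := by
      exact (ENNReal.mul_lt_mul_iff_left hC0 hCt).1 hlt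
    have h2 : r i ^ n < δ ^ n := by
      by_contra h
      push_neg at h
      exact absurd (ENNReal.ofReal_le_ofReal h) (not_le.2 h1)
    by_contra h
    push_neg at h
    exact absurd (pow_le_pow_left₀ hδ.le h n) (not_le.2 h2)
  -- the constant ε
  set ε : ENNReal := min (ENNReal.ofReal (c / 2 ^ n)) 1 with hεdef
  have hε0 : ε ≠ 0 := by
    refine (lt_min ?_ one_pos).ne'
    simp [ENNReal.ofReal_pos]
    positivity
  have hε1 : ε ≤ 1 := min_le_right _ _
  have hεκ : ε ≤ ENNReal.ofReal (c / 2 ^ n) := min_le_left _ _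
  -- measurability
  have hLBm : MeasurableSet LB :=
    MeasurableSet.iInter fun N => MeasurableSet.iUnion fun i =>
      MeasurableSet.iUnion fun _ => measurableSet_ball
  -- the exceptional sets
  set S : ℕ → Set (EuclideanSpace ℝ (Fin n)) := fun N => LB ∩ ⋂ i : ℕ, ⋂ _ : N ≤ i, (U i)ᶜ with hSdef
  have hSm : ∀ N, MeasurableSet (S N) := fun N =>
    hLBm.inter (MeasurableSet.iInter fun i => MeasurableSet.iInter fun _ => (hUm i).compl)
  -- density estimate
  have claimB : ∀ N, ∀ d ∈ S N, ∀ i, N ≤ i → d ∈ B i → 0 < r i →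
      μ (S N ∩ closedBall d (2 * r i)) / μ (closedBall d (2 * r i)) ≤ 1 - ε := by
    intro N d hd i hNi hdB hri
    set T := μ (closedBall d (2 * r i)) with hTdef
    have hTt : T ≠ ⊤ := measure_closedBall_lt_top.ne
    have hUcb : U i ⊆ closedBall d (2 * r i) := by
      intro y hy
      have hy' := hUB i hy
      rw [hBdef] at hdB
      have h1 : dist y d ≤ dist y (x i) + dist d (x i) := dist_triangle_right _ _ _
      have h2 : dist y (x i) < r i := mem_ball.1 hy'
      have h3 : dist d (x i) < r i := mem_ball.1 hdB
      exact mem_closedBall.2 (by linarith)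
    have hdisj : Disjoint (S N ∩ closedBall d (2 * r i)) (U i) := by
      refine Set.disjoint_left.2 fun y hy hyU => ?_
      have : y ∈ (U i)ᶜ := by
        have := hy.1.2
        exact mem_iInter.1 (mem_iInter.1 this i) hNi
      exact this hyU
    have hsum : μ (S N ∩ closedBall d (2 * r i)) + μ (U i) ≤ T := by
      rw [← measure_union hdisj (hUm i)]
      exact measure_mono (union_subset inter_subset_right hUcb)
    have hUlow : ε * T ≤ μ (U i) := by
      have hT : T = ENNReal.ofReal ((2 * r i) ^ n) * C := hcb d _ (by positivity)
      have key : ENNReal.ofReal (c / 2 ^ n) * T ≤ μ (U i) := by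
        rw [hT, ← mul_assoc, ← ENNReal.ofReal_mul (by positivity)]
        have harith : c / 2 ^ n * (2 * r i) ^ n = c * r i ^ n := by
          rw [mul_pow]
          field_simp
        rw [harith, ENNReal.ofReal_mul hc.le, mul_assoc, ← hball i hri]
        exact hlb i
      exact le_trans (mul_le_mul_left hεκ T) key
    have hmain : μ (S N ∩ closedBall d (2 * r i)) ≤ (1 - ε) * T := by
      have hsplit : (1 - ε) * T + ε * T = T := by
        rw [← add_mul, tsub_add_cancel_of_le hε1, one_mul]
      have : μ (S N ∩ closedBall d (2 * r i)) + ε * T ≤ (1 - ε) * T + ε * T := by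
        rw [hsplit]
        exact le_trans (add_le_add_right hUlow _) hsum
      exact ENNReal.le_of_add_le_add_right (ENNReal.mul_ne_top (lt_of_le_of_lt hε1 (by simp)).ne hTt) this
    exact ENNReal.div_le_of_le_mul hmain
  -- each S N is null
  have hSnull : ∀ N, μ (S N) = 0 := by
    intro N
    by_contra hpos
    have hres : μ.restrict (S N) ≠ 0 := by
      intro h
      apply hpos
      have := Measure.restrict_apply_self μ (S N)
      rw [h] at this
      simpa using this.symm
    haveI : NeBot (ae (μ.restrict (S N))) := ae_neBot.2 hres
    have hae := Besicovitch.ae_tendsto_measure_inter_div μ (S N)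
    have hmem : ∀ᵐ d ∂μ.restrict (S N), d ∈ S N := ae_restrict_mem (hSm N)
    obtain ⟨d, hdT, hdS⟩ := (hae.and hmem).exists
    -- d is a density point of S N lying in S N
    have h1ε : (1 : ENNReal) - ε < 1 := ENNReal.sub_lt_self ENNReal.one_ne_top one_ne_zero hε0
    have hev : ∀ᶠ ρ in 𝓝[>] (0 : ℝ),
        1 - ε < μ (S N ∩ closedBall d ρ) / μ (closedBall d ρ) :=
      hdT.eventually (eventually_gt_nhds h1ε)
    have hfreq : ∃ᶠ ρ in 𝓝[>] (0 : ℝ),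
        μ (S N ∩ closedBall d ρ) / μ (closedBall d ρ) ≤ 1 - ε := by
      rw [frequently_iff]
      intro s hs
      obtain ⟨δ, hδ, hsub⟩ := mem_nhdsGT_iff_exists_Ioc_subset.1 hs
      have hδ0 : (0 : ℝ) < δ := hδ
      obtain ⟨i, hNi, hdB, hri, hrδ⟩ := claimA d hdS.1 (δ / 2) (by linarith) N
      refine ⟨2 * r i, hsub ⟨by linarith, by linarith⟩, ?_⟩
      exact claimB N d hdS i hNi hdB hri
    obtain ⟨ρ, hρ1, hρ2⟩ := (hev.and_frequently hfreq).exists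
    exact absurd hρ2 (not_le.2 hρ1)
  -- conclude
  have hdiff : LB \ LU ⊆ ⋃ N : ℕ, S N := by
    intro y hy
    obtain ⟨hyB, hyU⟩ := hy
    rw [hLUdef, mem_iInter] at hyU
    push_neg at hyU
    obtain ⟨N, hN⟩ := hyU
    refine mem_iUnion.2 ⟨N, hyB, ?_⟩
    refine mem_iInter.2 fun i => mem_iInter.2 fun hi => fun hyUi => ?_
    exact hN (mem_iUnion.2 ⟨i, mem_iUnion.2 ⟨hi, hyUi⟩⟩)
  have hnull : μ (⋃ N : ℕ, S N) = 0 := measure_iUnion_null hSnull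
  refine le_antisymm (measure_mono hLUsub) ?_
  calc μ LB ≤ μ (LU ∪ (LB \ LU)) := measure_mono (by intro y hy; by_cases h : y ∈ LU <;> simp [h, hy])
    _ ≤ μ LU + μ (LB \ LU) := measure_union_le _ _
    _ ≤ μ LU + μ (⋃ N : ℕ, S N) := add_le_add_right (measure_mono hdiff) _
    _ = μ LU := by rw [hnull, add_zero]
end

section
/- Let F : ℕ → (0,∞) satisfy ∑_{m=1}^∞ F(m) = ∞. Then there exists a decreasing function η : ℕ → [0,1] with η(m) → 0, such that for every α > 0, m·η(m)^α → ∞ as m → ∞, η(2^r) ≤ 2·η(2^{r+1}) for all r ≥ 1, and ∑_{m=1}^∞ F(m)·η(m) = ∞. -/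
open Filter Set

private lemma aux_two_pow_mul (α : ℝ) (hα : 0 < α) :
    Tendsto (fun k : ℕ => (2:ℝ)^k * (1/((k:ℝ)+1))^α) atTop atTop := by
  have h := tendsto_exp_mul_div_rpow_atTop α (Real.log 2) (Real.log_pos one_lt_two)
  have h2 : Tendsto (fun k : ℕ => ((k:ℝ)+1)) atTop atTop :=
    tendsto_atTop_add_const_right _ 1 tendsto_natCast_atTop_atTop
  have h3 := h.comp h2
  have heq : ∀ k : ℕ, Real.exp (Real.log 2 * ((k:ℝ)+1)) / ((k:ℝ)+1)^α
      = 2 * ((2:ℝ)^k * (1/((k:ℝ)+1))^α) := by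
    intro k
    have h1 : (0:ℝ) < (k:ℝ)+1 := by positivity
    have hp : (0:ℝ) < ((k:ℝ)+1)^α := Real.rpow_pos_of_pos h1 α
    rw [← Real.rpow_natCast 2 k, one_div, Real.inv_rpow h1.le,
      ← Real.rpow_def_of_pos (by norm_num : (0:ℝ) < 2)]
    rw [Real.rpow_add (by norm_num : (0:ℝ) < 2), Real.rpow_one]
    field_simp
  have h4 : Tendsto (fun k : ℕ => 2 * ((2:ℝ)^k * (1/((k:ℝ)+1))^α)) atTop atTop :=
    h3.congr heq
  have h5 := h4.const_mul_atTop (show (0:ℝ) < 1/2 by norm_num)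
  refine h5.congr fun k => by ring

/-- Perturbation of divergent sums: a divergent positive series remains divergent after
multiplication by a suitable slowly decaying function `η`. -/
theorem exists_eta_of_divergent (F : ℕ → ℝ) (hF : ∀ m, 0 < F m)
    (hdiv : ¬ Summable F) :
    ∃ η : ℕ → ℝ, (∀ m, η m ∈ Set.Icc (0 : ℝ) 1) ∧ Antitone η ∧
      Tendsto η atTop (nhds 0) ∧
      (∀ α : ℝ, 0 < α → Tendsto (fun m : ℕ => (m : ℝ) * η m ^ α) atTop atTop) ∧
      (∀ r : ℕ, 1 ≤ r → η (2 ^ r) ≤ 2 * η (2 ^ (r + 1))) ∧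
      ¬ Summable (fun m => F m * η m) := by
  -- Step function: from any a we can reach b ≥ 2a with block sum > 1
  have hS : Tendsto (fun N => ∑ m ∈ Finset.range N, F m) atTop atTop :=
    (not_summable_iff_tendsto_nat_atTop_of_nonneg (fun m => (hF m).le)).1 hdiv
  have hstep : ∀ a : ℕ, ∃ b : ℕ, 2*a ≤ b ∧ 1 < ∑ m ∈ Finset.Ico a b, F m := by
    intro a
    obtain ⟨b, hb1, hb2⟩ := ((hS.eventually
      (eventually_gt_atTop (∑ m ∈ Finset.range a, F m + 1))).and
      (eventually_ge_atTop (2*a))).exists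
    refine ⟨b, hb2, ?_⟩
    rw [Finset.sum_Ico_eq_sub _ (by omega : a ≤ b)]
    linarith
  choose step hb hsum using hstep
  set n : ℕ → ℕ := fun i => Nat.rec 1 (fun _ p => step p) i with hn
  have hn0 : n 0 = 1 := rfl
  have hnsucc : ∀ i, n (i+1) = step (n i) := fun i => rfl
  have hpow : ∀ i, 2^i ≤ n i := by
    intro i
    induction i with
    | zero => simp [hn0]
    | succ i ih =>
      calc 2^(i+1) = 2 * 2^i := by ring
      _ ≤ 2 * n i := by omega
      _ ≤ n (i+1) := by rw [hnsucc]; exact hb (n i)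
  have hpos : ∀ i, 1 ≤ n i := fun i => le_trans (Nat.one_le_two_pow) (hpow i)
  have hdouble : ∀ i, 2 * n i ≤ n (i+1) := fun i => by rw [hnsucc]; exact hb (n i)
  have nstrict : StrictMono n := strictMono_nat_of_lt_succ (fun i => by
    have := hdouble i; have := hpos i; omega)
  set idx : ℕ → ℕ := fun m => Nat.findGreatest (fun i => n i ≤ m) m with hidx
  have hidx_le : ∀ m, 1 ≤ m → n (idx m) ≤ m := by
    intro m hm
    exact Nat.findGreatest_spec (P := fun i => n i ≤ m) (Nat.zero_le m)
      (show n 0 ≤ m by rw [hn0]; exact hm)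
  have hidx_lt : ∀ m, m < n (idx m + 1) := by
    intro m
    by_cases h : idx m + 1 ≤ m
    · by_contra h'
      push_neg at h'
      exact Nat.findGreatest_is_greatest (Nat.lt_succ_self _) h h'
    · push_neg at h
      have h1 : m ≤ idx m := by omega
      have h2 : idx m < 2^(idx m) := Nat.lt_two_pow_self
      have h3 : (2:ℕ)^(idx m) ≤ 2^(idx m + 1) := Nat.pow_le_pow_right (by norm_num) (by omega)
      have h4 := hpow (idx m + 1)
      omega
  have hidx_eq : ∀ i m, n i ≤ m → m < n (i+1) → idx m = i := by
    intro i m him hilt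
    have h1 : 1 ≤ m := le_trans (hpos i) him
    have hlt1 : idx m < i + 1 := nstrict.lt_iff_lt.mp (lt_of_le_of_lt (hidx_le m h1) hilt)
    have hlt2 : i < idx m + 1 := nstrict.lt_iff_lt.mp (lt_of_le_of_lt him (hidx_lt m))
    omega
  have idx_mono : Monotone idx := by
    intro a b hab
    by_cases ha : a = 0
    · subst ha
      simp [hidx, Nat.findGreatest_zero]
    · have h1 : 1 ≤ a := by omega
      have h2 : n (idx a) < n (idx b + 1) := lt_of_le_of_lt (le_trans (hidx_le a h1) hab) (hidx_lt b)
      have h3 : idx a < idx b + 1 := nstrict.lt_iff_lt.mp h2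
      omega
  have idx_n : ∀ i, idx (n i) = i := fun i =>
    hidx_eq i (n i) le_rfl (nstrict (Nat.lt_succ_self i))
  have idx_tendsto : Tendsto idx atTop atTop := by
    rw [tendsto_atTop_atTop]
    intro b
    refine ⟨n b, fun m hm => ?_⟩
    have := idx_mono hm
    rwa [idx_n] at this
  refine ⟨fun m => 1/((idx m : ℝ)+1), ?_, ?_, ?_, ?_, ?_, ?_⟩
  · intro m
    constructor
    · positivity
    · rw [div_le_one (by positivity)]
      have : (0:ℝ) ≤ (idx m : ℝ) := Nat.cast_nonneg _
      linarith
  · intro a b hab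
    have h := idx_mono hab
    apply one_div_le_one_div_of_le (by positivity)
    have : (idx a : ℝ) ≤ idx b := Nat.cast_le.mpr h
    linarith
  · exact tendsto_one_div_add_atTop_nhds_zero_nat.comp idx_tendsto
  · intro α hα
    have hg := (aux_two_pow_mul α hα).comp idx_tendsto
    apply tendsto_atTop_mono' _ _ hg
    filter_upwards [eventually_ge_atTop 1] with m hm
    have h1 : (2:ℝ)^(idx m) ≤ (m : ℝ) := by
      calc (2:ℝ)^(idx m) = ((2^(idx m) : ℕ) : ℝ) := by push_cast; ring
      _ ≤ ((n (idx m) : ℕ) : ℝ) := Nat.cast_le.mpr (hpow _)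
      _ ≤ (m : ℝ) := Nat.cast_le.mpr (hidx_le m hm)
    have h2 : (0:ℝ) ≤ (1/((idx m : ℝ)+1))^α := Real.rpow_nonneg (by positivity) α
    exact mul_le_mul_of_nonneg_right h1 h2
  · intro r hr
    set i := idx (2^r) with hi
    set j := idx (2^(r+1)) with hj
    have h1 : (2:ℕ)^r < n (i+1) := hidx_lt (2^r)
    have h2 : (2:ℕ)^(r+1) < n (i+2) := by
      have := hdouble (i+1)
      calc (2:ℕ)^(r+1) = 2 * 2^r := by ring
      _ < 2 * n (i+1) := by omega
      _ ≤ n (i+2) := hdouble (i+1)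
    have h3 : n j ≤ 2^(r+1) := hidx_le _ (Nat.one_le_two_pow)
    have h4 : j < i + 2 := nstrict.lt_iff_lt.mp (lt_of_le_of_lt h3 h2)
    have h5 : (j : ℝ) + 1 ≤ 2 * ((i : ℝ) + 1) := by
      have : (j:ℝ) ≤ (i:ℝ) + 1 := by exact_mod_cast Nat.lt_succ_iff.mp (by omega : j < (i+1)+1)
      linarith [Nat.cast_nonneg (α := ℝ) i]
    rw [show (2:ℝ) * (1/((j:ℝ)+1)) = 2/((j:ℝ)+1) by ring]
    rw [div_le_div_iff₀ (by positivity) (by positivity)]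
    nlinarith [Nat.cast_nonneg (α := ℝ) i, Nat.cast_nonneg (α := ℝ) j]
  · intro hsummable
    have hterm_nonneg : ∀ m, 0 ≤ F m * (1/((idx m : ℝ)+1)) := fun m => by
      have := (hF m).le; positivity
    have hblock : ∀ I, ∑ i ∈ Finset.range I, 1/((i:ℝ)+1)
        ≤ ∑ m ∈ Finset.Ico (n 0) (n I), F m * (1/((idx m : ℝ)+1)) := by
      intro I
      induction I with
      | zero => simp
      | succ I ih =>
        rw [Finset.sum_range_succ,
          ← Finset.sum_Ico_consecutive _ (nstrict.monotone (Nat.zero_le I))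
            (nstrict.monotone (Nat.le_succ I))]
        have hconst : ∑ m ∈ Finset.Ico (n I) (n (I+1)), F m * (1/((idx m : ℝ)+1))
            = (∑ m ∈ Finset.Ico (n I) (n (I+1)), F m) * (1/((I:ℝ)+1)) := by
          rw [Finset.sum_mul]
          apply Finset.sum_congr rfl
          intro m hm
          rw [Finset.mem_Ico] at hm
          rw [hidx_eq I m hm.1 hm.2]
        have hge : 1/((I:ℝ)+1) ≤ ∑ m ∈ Finset.Ico (n I) (n (I+1)), F m * (1/((idx m:ℝ)+1)) := by
          rw [hconst]
          have := hsum (n I)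
          rw [← hnsucc] at this
          have hp : (0:ℝ) < 1/((I:ℝ)+1) := by positivity
          nlinarith
        linarith
    have hbdd : ∀ I, ∑ i ∈ Finset.range I, 1/((i:ℝ)+1)
        ≤ ∑' m, F m * (1/((idx m : ℝ)+1)) := by
      intro I
      refine le_trans (hblock I) ?_
      exact Summable.sum_le_tsum _ (fun m _ => hterm_nonneg m) hsummable
    have hns : ¬ Summable (fun i : ℕ => 1/((i:ℝ)+1)) := by
      intro h
      apply Real.not_summable_one_div_natCast
      refine (summable_nat_add_iff 1).mp (h.congr fun i => ?_)
      push_cast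
      ring
    have hharm : Tendsto (fun I => ∑ i ∈ Finset.range I, 1/((i:ℝ)+1)) atTop atTop :=
      (not_summable_iff_tendsto_nat_atTop_of_nonneg (fun i => by positivity)).1 hns
    obtain ⟨I, hI⟩ := (hharm.eventually
      (eventually_gt_atTop (∑' m, F m * (1/((idx m : ℝ)+1))))).exists
    exact absurd (hbdd I) (not_le.mpr hI)
end
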